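/- Let A ∈ ℝ^{n×n} be nonzero with singular values σ₁ ≥ σ₂ ≥ ⋯ ≥ σ_n, let τ ∈ (0,1), γ > 0, and d ≥ 1 be real numbers such that σ₂ ≤ τ^γ σ₁ and ‖A‖_F² ≤ d σ₁² (i.e., the stable rank of A is at most d). If q is an integer with q ≥ 1 + (1/(2γ)) · (1 + ln d / ln(1/τ)), then σ₁^{2q} ≤ ∑_{i=1}^n σ_i^{2q} ≤ (1+τ) σ₁^{2q}; that is, ‖A‖_{S_{2q}}^{2q} approximates ‖A‖^{2q} to within a (1+τ) factor. -/

import Mathlib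

open Matrix Finset
open scoped Classical

/-- The singular values of a real square matrix: square roots of the eigenvalues of `AᴴA`. -/
noncomputable def singVals {n : ℕ} (A : Matrix (Fin n) (Fin n) ℝ) : Fin n → ℝ :=
  fun i => Real.sqrt ((show (Aᵀ * A).IsHermitian by simpa using Matrix.isHermitian_conjTranspose_mul_self A).eigenvalues i)

/-- Under a singular value gap `σ₂ ≤ τ^γ σ₁` and stable rank at most `d`, for
`q ≥ 1 + (1/(2γ))(1 + ln d / ln(1/τ))` the Schatten-`2q` norm approximates the operator norm:
`σ₁^{2q} ≤ ∑ σᵢ^{2q} ≤ (1+τ) σ₁^{2q}`.  Here `s` is the nonincreasing rearrangement of the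
singular values of `A`. -/
theorem stmt14 {n : ℕ} (hn : 2 ≤ n) (A : Matrix (Fin n) (Fin n) ℝ) (hA : A ≠ 0)
    (s : Fin n → ℝ) (hs : Antitone s)
    (hperm : ∃ e : Equiv.Perm (Fin n), ∀ i, s i = singVals A (e i))
    (τ γ d : ℝ) (hτ0 : 0 < τ) (hτ1 : τ < 1) (hγ : 0 < γ) (hd : 1 ≤ d)
    (hgap : s ⟨1, by omega⟩ ≤ τ ^ γ * s ⟨0, by omega⟩)
    (hsr : ∑ i, (s i) ^ 2 ≤ d * (s ⟨0, by omega⟩) ^ 2)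
    (q : ℕ) (hq : 1 + 1 / (2 * γ) * (1 + Real.log d / Real.log (1 / τ)) ≤ (q : ℝ)) :
    (s ⟨0, by omega⟩) ^ (2 * q) ≤ ∑ i, (s i) ^ (2 * q) ∧
      ∑ i, (s i) ^ (2 * q) ≤ (1 + τ) * (s ⟨0, by omega⟩) ^ (2 * q) := by
  obtain ⟨e, he⟩ := hperm
  have hnn : ∀ i, 0 ≤ s i := fun i => by
    rw [he]; exact Real.sqrt_nonneg _
  have i0 : Fin n := ⟨0, by omega⟩
  -- abbreviations
  set σ0 : ℝ := s ⟨0, by omega⟩ with hσ0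
  set s1 : ℝ := s ⟨1, by omega⟩ with hs1
  set D : ℝ := Real.log d with hD
  set L : ℝ := Real.log (1 / τ) with hLdef
  have hL : 0 < L := Real.log_pos (one_lt_one_div hτ0 hτ1)
  have hDnn : 0 ≤ D := Real.log_nonneg hd
  have hq1R : (1 : ℝ) ≤ (q : ℝ) := by
    have h1 : 0 ≤ 1 / (2 * γ) * (1 + D / L) :=
      mul_nonneg (by positivity) (by have := div_nonneg hDnn hL.le; linarith)
    linarith
  have hq1 : 1 ≤ q := by exact_mod_cast hq1R
  set m : ℕ := 2 * q - 2 with hm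
  have hm2 : 2 * q = m + 2 := by omega
  have hmR : (m : ℝ) = 2 * (q : ℝ) - 2 := by
    rw [hm]; push_cast [Nat.cast_sub (by omega : 2 ≤ 2 * q)]; ring
  -- the key analytic inequality
  have hlog : D + γ * (m : ℝ) * Real.log τ ≤ Real.log τ := by
    have hLτ : L = -Real.log τ := by rw [hLdef, one_div, Real.log_inv]
    have hmul : 1 / (2 * γ) * (1 + D / L) * (2 * γ * L) = L + D := by
      field_simp
    have h3 : 1 / (2 * γ) * (1 + D / L) * (2 * γ * L) ≤ ((q : ℝ) - 1) * (2 * γ * L) :=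
      mul_le_mul_of_nonneg_right (by linarith) (by positivity)
    rw [hmul] at h3
    have h4 : γ * (m : ℝ) * Real.log τ = -(((q : ℝ) - 1) * (2 * γ * L)) := by
      rw [hmR, hLτ]; ring
    linarith
  have key : d * (τ ^ γ) ^ m ≤ τ := by
    have hτγ : (τ ^ γ) ^ m = Real.exp (γ * (m : ℝ) * Real.log τ) := by
      rw [← Real.rpow_natCast (τ ^ γ) m, ← Real.rpow_mul hτ0.le,
        Real.rpow_def_of_pos hτ0]
      ring_nf
    rw [hτγ]
    calc d * Real.exp (γ * (m : ℝ) * Real.log τ)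
        = Real.exp (D + γ * (m : ℝ) * Real.log τ) := by
          rw [Real.exp_add, Real.exp_log (by linarith : (0 : ℝ) < d)]
      _ ≤ Real.exp (Real.log τ) := Real.exp_le_exp.mpr hlog
      _ = τ := Real.exp_log hτ0
  constructor
  · exact Finset.single_le_sum (fun i _ => pow_nonneg (hnn i) _) (Finset.mem_univ _)
  · -- upper bound
    have hsplit : ∑ i, s i ^ (2 * q)
        = σ0 ^ (2 * q) + ∑ i ∈ Finset.univ.erase ⟨0, by omega⟩, s i ^ (2 * q) :=
      (Finset.add_sum_erase _ _ (Finset.mem_univ _)).symm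
    have hterm : ∀ i ∈ Finset.univ.erase (⟨0, by omega⟩ : Fin n),
        s i ^ (2 * q) ≤ (τ ^ γ * σ0) ^ m * s i ^ 2 := by
      intro i hi
      have hi0 : i ≠ (⟨0, by omega⟩ : Fin n) := Finset.ne_of_mem_erase hi
      have h1i : (⟨1, by omega⟩ : Fin n) ≤ i := by
        rw [Fin.le_def]
        simp only [Fin.val_mk]
        have : i.1 ≠ 0 := fun h => hi0 (Fin.ext h)
        omega
      have hsi : s i ≤ τ ^ γ * σ0 := le_trans (hs h1i) hgap
      calc s i ^ (2 * q) = s i ^ m * s i ^ 2 := by rw [hm2, pow_add]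
        _ ≤ (τ ^ γ * σ0) ^ m * s i ^ 2 :=
            mul_le_mul_of_nonneg_right (pow_le_pow_left₀ (hnn i) hsi m) (sq_nonneg _)
    have h5 : ∑ i ∈ Finset.univ.erase (⟨0, by omega⟩ : Fin n), s i ^ (2 * q)
        ≤ (τ ^ γ * σ0) ^ m * ∑ i ∈ Finset.univ.erase (⟨0, by omega⟩ : Fin n), s i ^ 2 := by
      rw [Finset.mul_sum]; exact Finset.sum_le_sum hterm
    have h6 : ∑ i ∈ Finset.univ.erase (⟨0, by omega⟩ : Fin n), s i ^ 2 ≤ d * σ0 ^ 2 :=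
      le_trans (Finset.sum_le_sum_of_subset_of_nonneg (Finset.erase_subset _ _)
        (fun i _ _ => sq_nonneg _)) hsr
    have hbase : 0 ≤ (τ ^ γ * σ0) ^ m :=
      pow_nonneg (mul_nonneg (Real.rpow_nonneg hτ0.le γ) (hnn _)) m
    have h7 : (τ ^ γ * σ0) ^ m * (d * σ0 ^ 2) = d * (τ ^ γ) ^ m * σ0 ^ (2 * q) := by
      rw [hm2, mul_pow, pow_add]; ring
    have hσnn : 0 ≤ σ0 ^ (2 * q) := pow_nonneg (hnn _) _
    calc ∑ i, s i ^ (2 * q)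
        = σ0 ^ (2 * q) + ∑ i ∈ Finset.univ.erase (⟨0, by omega⟩ : Fin n), s i ^ (2 * q) :=
          hsplit
      _ ≤ σ0 ^ (2 * q) + (τ ^ γ * σ0) ^ m * (d * σ0 ^ 2) := by
          have := le_trans h5 (mul_le_mul_of_nonneg_left h6 hbase)
          linarith
      _ = (1 + d * (τ ^ γ) ^ m) * σ0 ^ (2 * q) := by rw [h7]; ring
      _ ≤ (1 + τ) * σ0 ^ (2 * q) := by
          nlinarith [mul_nonneg (sub_nonneg.mpr key) hσnn]
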